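/- Suppose C ⊇ M is full and ⟨A, B⟩ is an M-f.s. sequence over C (i.e., tp(A/C) and tp(B/AC) are finitely satisfied in M). If B is partitioned as B₁ ∪ B₂ (not necessarily convex), then ⟨A, B₁, B₂⟩ is an M-f.s. sequence over C if and only if ⟨B₁, B₂⟩ is an M-f.s. sequence over C. -/

import Mathlib

open FirstOrder FirstOrder.Language Cardinal Set

universe u v w

namespace MonadicNIP

variable {L : FirstOrder.Language.{u, u}} {C : Type u} [L.Structure C]

/-- The complete type of the tuple `a` over the parameter set `B`:
all formulas with parameters from `B` and variables `α` satisfied by `a`. -/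
def tpSet {α : Type v} (B : Set C) (a : α → C) : Set (L.Formula (B ⊕ α)) :=
  {φ | φ.Realize (Sum.elim (Subtype.val : B → C) a)}

/-- A set of formulas over `B` (a "type") is finitely satisfied in `M` if each of
its formulas is realized by a tuple from `M`. -/
def FinSat (M : Set C) {α : Type v} {B : Set C} (p : Set (L.Formula (B ⊕ α))) : Prop :=
  ∀ φ ∈ p, ∃ m : α → C, (∀ i, m i ∈ M) ∧
    Formula.Realize φ (Sum.elim (Subtype.val : B → C) m)

/-- `p` is a complete type over `B` (in the monster `C`): finitely satisfiable
in `C` and deciding every formula. -/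
def IsCompleteType {α : Type v} (B : Set C) (p : Set (L.Formula (B ⊕ α))) : Prop :=
  (∀ s : Finset (L.Formula (B ⊕ α)), ↑s ⊆ p →
      ∃ a : α → C, ∀ φ ∈ s, Formula.Realize φ (Sum.elim (Subtype.val : B → C) a)) ∧
    ∀ φ : L.Formula (B ⊕ α), φ ∈ p ∨ φ.not ∈ p

/-- `tp(A/B)` is finitely satisfied in `M` (formulated without an enumeration of `A`). -/
def SetFinSat (L : FirstOrder.Language.{u, u}) {C : Type u} [L.Structure C] (M B A : Set C) : Prop :=
  ∀ (n : ℕ) (φ : L.Formula (B ⊕ Fin n)) (a : Fin n → C), (∀ i, a i ∈ A) →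
    φ.Realize (Sum.elim (Subtype.val : B → C) a) →
    ∃ m : Fin n → C, (∀ i, m i ∈ M) ∧ φ.Realize (Sum.elim (Subtype.val : B → C) m)

/-- `⟨A i : i ∈ I⟩` is an `M`-f.s. sequence over `B`. -/
def IsFSSeq (L : FirstOrder.Language.{u, u}) {C : Type u} [L.Structure C] (M B : Set C) {I : Type v} [LinearOrder I] (A : I → Set C) : Prop :=
  ∀ i : I, SetFinSat L M (B ∪ ⋃ j < i, A j) (A i)

/-- The average type of an ultrafilter `U` on `M^n` over the parameter set `B`. -/
def Av {n : ℕ} {M : Set C} (U : Ultrafilter (Fin n → M)) (B : Set C) :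
    Set (L.Formula (B ⊕ Fin n)) :=
  {φ | {m : Fin n → M |
      Formula.Realize φ (Sum.elim (Subtype.val : B → C) (fun i => (m i : C)))} ∈ U}

/-- `C0` is full (for non-splitting over `M`): every complete type over `M`
in finitely many variables (realized in the monster) is realized in `C0`. -/
def IsFull (L : FirstOrder.Language.{u, u}) {C : Type u} [L.Structure C] (M C0 : Set C) : Prop :=
  ∀ (n : ℕ) (a : Fin n → C), ∃ c : Fin n → C, (∀ i, c i ∈ C0) ∧
    tpSet (L := L) M a = tpSet (L := L) M c

/-- The sequence of tuples `a` is indiscernible over `B`. -/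
def IndiscernibleOver (L : FirstOrder.Language.{u, u}) {C : Type u} [L.Structure C] {I : Type v} [LinearOrder I] {α : Type w} (B : Set C)
    (a : I → α → C) : Prop :=
  ∀ (n : ℕ) (i j : Fin n → I), StrictMono i → StrictMono j →
    tpSet (L := L) B (fun p : Fin n × α => a (i p.1) p.2) =
      tpSet (L := L) B (fun p : Fin n × α => a (j p.1) p.2)

/-- The type `p` over `B` does not split over `M0`: parameter tuples from `B`
with the same type over `M0` are interchangeable in `p`. -/
def NotSplitOver (M0 : Set C) {B : Set C} {α : Type v}
    (p : Set (L.Formula (B ⊕ α))) : Prop :=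
  ∀ (k : ℕ) (b b' : Fin k → B) (φ : L.Formula (Fin k ⊕ α)),
    tpSet (L := L) M0 (fun i => (b i : C)) = tpSet (L := L) M0 (fun i => (b' i : C)) →
    (φ.relabel (Sum.elim (fun i => Sum.inl (b i)) Sum.inr) ∈ p ↔
      φ.relabel (Sum.elim (fun i => Sum.inl (b' i)) Sum.inr) ∈ p)



lemma realize_congr_freeVar {α : Type v} [DecidableEq α] (φ : L.Formula α) {v v' : α → C}
    (h : ∀ x ∈ BoundedFormula.freeVarFinset φ, v x = v' x) :
    φ.Realize v ↔ φ.Realize v' := by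
  have hs : ↑(BoundedFormula.freeVarFinset φ) ⊆ ((BoundedFormula.freeVarFinset φ : Set α)) :=
    subset_rfl
  have h1 := BoundedFormula.realize_restrictFreeVar' (M := C) hs (v := v) (xs := default)
  have h2 := BoundedFormula.realize_restrictFreeVar' (M := C) hs (v := v') (xs := default)
  have hvv : v ∘ (Subtype.val : {x // x ∈ (↑(BoundedFormula.freeVarFinset φ) : Set α)} → α) =
      v' ∘ Subtype.val := funext fun x => h x.1 x.2
  unfold Formula.Realize
  rw [← h1, ← h2, hvv]

lemma mem_tpSet_iff {α : Type v} {B : Set C} {a : α → C} {φ : L.Formula (B ⊕ α)} :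
    φ ∈ tpSet (L := L) B a ↔ φ.Realize (Sum.elim (Subtype.val : B → C) a) := Iff.rfl

/-- Transfer a tpSet equality along a reindexing equivalence. -/
lemma tpSet_comp_eq {α β : Type v} {M : Set C} (e : α ≃ β) {x y : β → C}
    (h : tpSet (L := L) M x = tpSet (L := L) M y) :
    tpSet (L := L) M (x ∘ e) = tpSet (L := L) M (y ∘ e) := by
  have key : ∀ (z : β → C) (χ : L.Formula (M ⊕ α)),
      χ ∈ tpSet (L := L) M (z ∘ e) ↔ χ.relabel (Sum.map id e) ∈ tpSet (L := L) M z := by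
    intro z χ
    rw [mem_tpSet_iff, mem_tpSet_iff, Formula.realize_relabel]
    have : (Sum.elim (Subtype.val : M → C) z) ∘ Sum.map id e =
        Sum.elim (Subtype.val : M → C) (z ∘ e) := by
      funext i; cases i <;> rfl
    rw [this]
  ext χ
  rw [key x, key y, h]

/-- Appending a tuple of elements of `M` preserves equality of types over `M`. -/
lemma tpSet_append {α ν : Type v} {M : Set C} {x y : α → C}
    (h : tpSet (L := L) M x = tpSet (L := L) M y) (m : ν → C) (hm : ∀ i, m i ∈ M) :
    tpSet (L := L) M (Sum.elim x m) = tpSet (L := L) M (Sum.elim y m) := by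
  have key : ∀ (z : α → C) (χ : L.Formula (M ⊕ (α ⊕ ν))),
      χ ∈ tpSet (L := L) M (Sum.elim z m) ↔
        χ.relabel (Sum.elim Sum.inl (Sum.elim Sum.inr (fun j => Sum.inl ⟨m j, hm j⟩)))
          ∈ tpSet (L := L) M z := by
    intro z χ
    rw [mem_tpSet_iff, mem_tpSet_iff, Formula.realize_relabel]
    have : (Sum.elim (Subtype.val : M → C) z) ∘
        (Sum.elim Sum.inl (Sum.elim Sum.inr (fun j => Sum.inl ⟨m j, hm j⟩))) =
        Sum.elim (Subtype.val : M → C) (Sum.elim z m) := by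
      funext i; rcases i with i | (i | i) <;> rfl
    rw [this]
  ext χ
  rw [key x, key y, h]

/-- Base monotonicity of finite satisfiability. -/
lemma SetFinSat.mono_base {M D' D A : Set C} (hsub : D' ⊆ D)
    (h : SetFinSat L M D A) : SetFinSat L M D' A := by
  intro n φ a ha hφ
  have hcomp : ∀ (w : Fin n → C),
      (Sum.elim (Subtype.val : D → C) w) ∘ (Sum.map (Set.inclusion hsub) id) =
        Sum.elim (Subtype.val : D' → C) w := by
    intro w; funext i; cases i <;> rfl
  obtain ⟨m, hm, hmφ⟩ := h n (φ.relabel (Sum.map (Set.inclusion hsub) id)) a ha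
    (by rw [Formula.realize_relabel, hcomp]; exact hφ)
  rw [Formula.realize_relabel, hcomp] at hmφ
  exact ⟨m, hm, hmφ⟩

lemma SetFinSat.mono_set {M D A' A : Set C} (hsub : A' ⊆ A)
    (h : SetFinSat L M D A) : SetFinSat L M D A' :=
  fun n φ a ha hφ => h n φ a (fun i => hsub (ha i)) hφ

/-- Finite satisfiability in `M` implies non-splitting over `M`:
parameter tuples with the same type over `M` can be exchanged. -/
lemma swap_params {M D A : Set C} (hfs : SetFinSat L M D A) {κ : Type v} {ν : Type w} [Fintype ν]
    (d d' : κ → C) (hd : ∀ i, d i ∈ D) (hd' : ∀ i, d' i ∈ D)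
    (htp : tpSet (L := L) M d = tpSet (L := L) M d')
    (φ : L.Formula (κ ⊕ ν)) (a : ν → C) (ha : ∀ i, a i ∈ A)
    (h : φ.Realize (Sum.elim d a)) : φ.Realize (Sum.elim d' a) := by
  by_contra hcon
  set N := Fintype.card ν
  let e : ν ≃ Fin N := Fintype.equivFin ν
  let Ψ : L.Formula (D ⊕ ν) :=
    (φ.relabel (Sum.map (fun i => (⟨d i, hd i⟩ : D)) id)) ⊓
      (φ.relabel (Sum.map (fun i => (⟨d' i, hd' i⟩ : D)) id)).not
  have hΨ : ∀ (w : ν → C), Ψ.Realize (Sum.elim (Subtype.val : D → C) w) ↔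
      (φ.Realize (Sum.elim d w) ∧ ¬ φ.Realize (Sum.elim d' w)) := by
    intro w
    have e1 : (Sum.elim (Subtype.val : D → C) w) ∘
        (Sum.map (fun i => (⟨d i, hd i⟩ : D)) id) = Sum.elim d w := by
      funext i; cases i <;> rfl
    have e2 : (Sum.elim (Subtype.val : D → C) w) ∘
        (Sum.map (fun i => (⟨d' i, hd' i⟩ : D)) id) = Sum.elim d' w := by
      funext i; cases i <;> rfl
    simp only [Ψ, Formula.realize_inf, Formula.realize_not, Formula.realize_relabel, e1, e2]
  -- transfer to a `Fin N`-indexed formula to apply `hfs`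
  let Ψ' : L.Formula (D ⊕ Fin N) := Ψ.relabel (Sum.map id e)
  have hΨ' : ∀ (w : Fin N → C), Ψ'.Realize (Sum.elim (Subtype.val : D → C) w) ↔
      Ψ.Realize (Sum.elim (Subtype.val : D → C) (w ∘ e)) := by
    intro w
    rw [Formula.realize_relabel]
    have : (Sum.elim (Subtype.val : D → C) w) ∘ (Sum.map id e) =
        Sum.elim (Subtype.val : D → C) (w ∘ e) := by
      funext i; cases i <;> rfl
    rw [this]
  obtain ⟨m', hm', hmΨ⟩ := hfs N Ψ' (a ∘ e.symm) (fun i => ha _) (by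
    rw [hΨ', hΨ]
    have : (a ∘ e.symm) ∘ e = a := by funext i; simp
    rw [this]
    exact ⟨h, hcon⟩)
  rw [hΨ', hΨ] at hmΨ
  set m : ν → C := m' ∘ e with hm_def
  obtain ⟨hmd, hmd'⟩ := hmΨ
  -- now use the type equality over M to contradict
  have hmem : ∀ i, m i ∈ M := fun i => hm' _
  let χ : L.Formula (M ⊕ κ) :=
    φ.relabel (Sum.elim Sum.inr (fun j => Sum.inl (⟨m j, hmem j⟩ : M)))
  have hχ : ∀ (z : κ → C), χ.Realize (Sum.elim (Subtype.val : M → C) z) ↔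
      φ.Realize (Sum.elim z m) := by
    intro z
    rw [Formula.realize_relabel]
    have : (Sum.elim (Subtype.val : M → C) z) ∘
        (Sum.elim Sum.inr (fun j => Sum.inl (⟨m j, hmem j⟩ : M))) = Sum.elim z m := by
      funext i; cases i <;> rfl
    rw [this]
  have hmem1 : χ ∈ tpSet (L := L) M d := (hχ d).mpr hmd
  rw [htp] at hmem1
  exact hmd' ((hχ d').mp hmem1)


lemma key_step {M C0 A B B1 B2 : Set C}
    (hMC : M ⊆ C0) (hfull : IsFull L M C0)
    (hB : SetFinSat L M (C0 ∪ A) B)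
    (hB1 : B1 ⊆ B) (hB2 : B2 ⊆ B)
    (h2 : SetFinSat L M (C0 ∪ B1) B2) :
    SetFinSat L M (C0 ∪ A ∪ B1) B2 := by
  classical
  set S : Set C := C0 ∪ A ∪ B1 with hSdef
  intro n φ b2 hb2 hφ
  rcases Nat.eq_zero_or_pos n with hn | hn
  · subst hn; exact ⟨b2, fun i => i.elim0, hφ⟩
  -- classify the free parameters of φ
  set t : Finset S := (BoundedFormula.freeVarFinset φ).preimage Sum.inl Sum.inl_injective.injOn
    with htdef
  set tC : Finset S := t.filter (fun s => (s : C) ∈ C0) with htC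
  set tA : Finset S := t.filter (fun s => (s : C) ∈ A ∧ (s : C) ∉ C0) with htA
  set tB : Finset S := t.filter (fun s => (s : C) ∈ B1 ∧ (s : C) ∉ A ∧ (s : C) ∉ C0) with htB
  set q := tC.card
  set p := tA.card
  set r := tB.card
  set eC : tC ≃ Fin q := tC.equivFin
  set eA : tA ≃ Fin p := tA.equivFin
  set eB : tB ≃ Fin r := tB.equivFin
  set c : Fin q → C := fun i => ((eC.symm i : S) : C) with hcdef
  set a : Fin p → C := fun i => ((eA.symm i : S) : C) with hadef
  set b1 : Fin r → C := fun i => ((eB.symm i : S) : C) with hb1def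
  have hcC0 : ∀ i, c i ∈ C0 := fun i => (Finset.mem_filter.mp (eC.symm i).2).2
  have haA : ∀ i, a i ∈ A := fun i => (Finset.mem_filter.mp (eA.symm i).2).2.1
  have hb1B1 : ∀ i, b1 i ∈ B1 := fun i => (Finset.mem_filter.mp (eB.symm i).2).2.1
  -- the repositioning map
  set pos : S → (Fin q ⊕ Fin p) ⊕ (Fin r ⊕ Fin n) := fun s =>
    if h : s ∈ tC then Sum.inl (Sum.inl (eC ⟨s, h⟩))
    else if h : s ∈ tA then Sum.inl (Sum.inr (eA ⟨s, h⟩))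
    else if h : s ∈ tB then Sum.inr (Sum.inl (eB ⟨s, h⟩))
    else Sum.inr (Sum.inr ⟨0, hn⟩) with hposdef
  set g : S ⊕ Fin n → (Fin q ⊕ Fin p) ⊕ (Fin r ⊕ Fin n) :=
    Sum.elim pos (fun j => Sum.inr (Sum.inr j)) with hgdef
  set θ : L.Formula ((Fin q ⊕ Fin p) ⊕ (Fin r ⊕ Fin n)) := φ.relabel g with hθdef
  have bridge : ∀ (w : Fin n → C),
      θ.Realize (Sum.elim (Sum.elim c a) (Sum.elim b1 w)) ↔
        φ.Realize (Sum.elim (Subtype.val : S → C) w) := by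
    intro w
    rw [hθdef, Formula.realize_relabel]
    apply realize_congr_freeVar
    intro x hx
    rcases x with s | j
    · have hst : s ∈ t := Finset.mem_preimage.mpr hx
      by_cases h1 : s ∈ tC
      · simp only [hgdef, Sum.elim_inl, Function.comp_apply, hposdef, dif_pos h1]
        show c (eC ⟨s, h1⟩) = (s : C)
        rw [hcdef]; simp
      by_cases h2 : s ∈ tA
      · simp only [hgdef, Sum.elim_inl, Function.comp_apply, hposdef, dif_neg h1, dif_pos h2]
        show a (eA ⟨s, h2⟩) = (s : C)
        rw [hadef]; simp
      by_cases h3 : s ∈ tB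
      · simp only [hgdef, Sum.elim_inl, Function.comp_apply, hposdef, dif_neg h1, dif_neg h2,
          dif_pos h3]
        show b1 (eB ⟨s, h3⟩) = (s : C)
        rw [hb1def]; simp
      · exfalso
        by_cases hc0 : (s : C) ∈ C0
        · exact h1 (Finset.mem_filter.mpr ⟨hst, hc0⟩)
        by_cases hA0 : (s : C) ∈ A
        · exact h2 (Finset.mem_filter.mpr ⟨hst, hA0, hc0⟩)
        have hBmem : (s : C) ∈ B1 := by
          rcases s.2 with (h | h) | h
          · exact absurd h hc0
          · exact absurd h hA0
          · exact h
        exact h3 (Finset.mem_filter.mpr ⟨hst, hBmem, hA0, hc0⟩)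
    · rfl
  have hθ : θ.Realize (Sum.elim (Sum.elim c a) (Sum.elim b1 b2)) := (bridge b2).mpr hφ
  -- use fullness to find a copy of (c, a) inside C0
  obtain ⟨u', hu', htpu⟩ := hfull (q + p) (fun i => Sum.elim c a (finSumFinEquiv.symm i))
  set c₁ : Fin q → C := fun i => u' (finSumFinEquiv (Sum.inl i)) with hc1def
  set a₁ : Fin p → C := fun i => u' (finSumFinEquiv (Sum.inr i)) with ha1def
  have hc₁ : ∀ i, c₁ i ∈ C0 := fun i => hu' _
  have ha₁ : ∀ i, a₁ i ∈ C0 := fun i => hu' _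
  have htp1 : tpSet (L := L) M (Sum.elim c a) = tpSet (L := L) M (Sum.elim c₁ a₁) := by
    have h' := tpSet_comp_eq (L := L) (M := M) finSumFinEquiv htpu
    have e1 : (fun i => Sum.elim c a (finSumFinEquiv.symm i)) ∘ ⇑finSumFinEquiv =
        Sum.elim c a := by funext i; simp
    have e2 : u' ∘ ⇑finSumFinEquiv = Sum.elim c₁ a₁ := by funext i; cases i <;> rfl
    rwa [e1, e2] at h'
  -- swap (c, a) for (c₁, a₁) using non-splitting of tp(b₁b₂ / C0 ∪ A)
  have hθ₁ : θ.Realize (Sum.elim (Sum.elim c₁ a₁) (Sum.elim b1 b2)) := by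
    refine swap_params hB (Sum.elim c a) (Sum.elim c₁ a₁) ?_ ?_ htp1 θ (Sum.elim b1 b2) ?_ hθ
    · intro i; rcases i with i | i
      · exact Or.inl (hcC0 i)
      · exact Or.inr (haA i)
    · intro i; rcases i with i | i
      · exact Or.inl (hc₁ i)
      · exact Or.inl (ha₁ i)
    · intro i; rcases i with i | i
      · exact hB1 (hb1B1 i)
      · exact hB2 (hb2 i)
  -- apply finite satisfiability of tp(b₂ / C0 ∪ B1)
  set g₂ : (Fin q ⊕ Fin p) ⊕ (Fin r ⊕ Fin n) → ↥(C0 ∪ B1) ⊕ Fin n :=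
    Sum.elim
      (Sum.elim (fun i => Sum.inl ⟨c₁ i, Or.inl (hc₁ i)⟩)
        (fun i => Sum.inl ⟨a₁ i, Or.inl (ha₁ i)⟩))
      (Sum.elim (fun i => Sum.inl ⟨b1 i, Or.inr (hb1B1 i)⟩) Sum.inr) with hg2def
  set θ₂ : L.Formula (↥(C0 ∪ B1) ⊕ Fin n) := θ.relabel g₂ with hθ2def
  have hθ₂iff : ∀ (w : Fin n → C),
      θ₂.Realize (Sum.elim (Subtype.val : ↥(C0 ∪ B1) → C) w) ↔
        θ.Realize (Sum.elim (Sum.elim c₁ a₁) (Sum.elim b1 w)) := by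
    intro w
    rw [hθ2def, Formula.realize_relabel]
    have : (Sum.elim (Subtype.val : ↥(C0 ∪ B1) → C) w) ∘ g₂ =
        Sum.elim (Sum.elim c₁ a₁) (Sum.elim b1 w) := by
      funext i; rcases i with (i | i) | (i | i) <;> rfl
    rw [this]
  obtain ⟨m, hm, hmθ⟩ := h2 n θ₂ b2 hb2 ((hθ₂iff b2).mpr hθ₁)
  have hθ₃ : θ.Realize (Sum.elim (Sum.elim c₁ a₁) (Sum.elim b1 m)) := (hθ₂iff m).mp hmθ
  -- swap back using non-splitting of tp(b₁ / C0 ∪ A)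
  set g₃ : (Fin q ⊕ Fin p) ⊕ (Fin r ⊕ Fin n) → ((Fin q ⊕ Fin p) ⊕ Fin n) ⊕ Fin r :=
    Sum.elim (fun x => Sum.inl (Sum.inl x)) (Sum.elim Sum.inr (fun j => Sum.inl (Sum.inr j)))
    with hg3def
  set θ' : L.Formula (((Fin q ⊕ Fin p) ⊕ Fin n) ⊕ Fin r) := θ.relabel g₃ with hθ'def
  have hθ'iff : ∀ (X : (Fin q ⊕ Fin p) → C) (w : Fin n → C) (v : Fin r → C),
      θ'.Realize (Sum.elim (Sum.elim X w) v) ↔ θ.Realize (Sum.elim X (Sum.elim v w)) := by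
    intro X w v
    rw [hθ'def, Formula.realize_relabel]
    have : (Sum.elim (Sum.elim X w) v) ∘ g₃ = Sum.elim X (Sum.elim v w) := by
      funext i; rcases i with (i | i) | (i | i) <;> rfl
    rw [this]
  have htp' : tpSet (L := L) M (Sum.elim (Sum.elim c₁ a₁) m) =
      tpSet (L := L) M (Sum.elim (Sum.elim c a) m) := tpSet_append htp1.symm m hm
  have hθ₄ : θ.Realize (Sum.elim (Sum.elim c a) (Sum.elim b1 m)) := by
    refine (hθ'iff _ m b1).mp
      (swap_params (hB.mono_set hB1) (Sum.elim (Sum.elim c₁ a₁) m) (Sum.elim (Sum.elim c a) m)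
        ?_ ?_ htp' θ' b1 hb1B1 ((hθ'iff _ m b1).mpr hθ₃))
    · intro i; rcases i with (i | i) | i
      · exact Or.inl (hc₁ i)
      · exact Or.inl (ha₁ i)
      · exact Or.inl (hMC (hm i))
    · intro i; rcases i with (i | i) | i
      · exact Or.inl (hcC0 i)
      · exact Or.inr (haA i)
      · exact Or.inl (hMC (hm i))
  exact ⟨m, hm, (bridge m).mp hθ₄⟩


/-- Over a full `C0 ⊇ M`, if `⟨A, B⟩` is an `M`-f.s. sequence over `C0`
and `B = B₁ ⊔ B₂`, then `⟨A, B₁, B₂⟩` is an `M`-f.s. sequence over `C0` iff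
`⟨B₁, B₂⟩` is an `M`-f.s. sequence over `C0`. -/
theorem statement7 (M : L.ElementarySubstructure C) (C0 : Set C)
    (hMC : (M : Set C) ⊆ C0) (hfull : IsFull L (M : Set C) C0)
    (A B B1 B2 : Set C)
    (hA : SetFinSat L (M : Set C) C0 A)
    (hB : SetFinSat L (M : Set C) (C0 ∪ A) B)
    (hunion : B = B1 ∪ B2) (hdisj : Disjoint B1 B2) :
    (SetFinSat L (M : Set C) (C0 ∪ A) B1 ∧
       SetFinSat L (M : Set C) (C0 ∪ A ∪ B1) B2) ↔
    (SetFinSat L (M : Set C) C0 B1 ∧ SetFinSat L (M : Set C) (C0 ∪ B1) B2) := by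
  constructor
  · rintro ⟨h1, h2⟩
    exact ⟨h1.mono_base subset_union_left,
      h2.mono_base (Set.union_subset_union subset_union_left Set.Subset.rfl)⟩
  · rintro ⟨h1, h2⟩
    have hBB1 : B1 ⊆ B := hunion ▸ subset_union_left
    have hBB2 : B2 ⊆ B := hunion ▸ subset_union_right
    exact ⟨hB.mono_set hBB1, key_step hMC hfull hB hBB1 hBB2 h2⟩

end MonadicNIP
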